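/- Let d ≥ 1, n ≥ 1, ω : ℝ^d → [0,∞), P ∈ ℝ^d, a ≥ 0, κ > 0, γ > 0, and let π ∈ 𝒲_{2n} be a Wick pairing. Then for every z ∈ ℂ with Re z = −κ + γ·|Im z| and every k = (k₁,…,kₙ) ∈ (ℝ^d)^n, each factor z − a − E^{(π,j)}_P(k) (1 ≤ j ≤ 2n) is nonzero and ∏_{j=1}^{2n} |z − a − E^{(π,j)}_P(k)|⁻¹ ≤ ((1+γ²)/(κ+a))^n · ∏_{i=1}^n (κ + a + ω(k_i) + |k_i|²/2)⁻¹. -/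

import Mathlib

/-- The element of `Fin (2n)` at (0-based) position `2i`; it corresponds to the paper's
(1-based) position `2i-1`. -/
def wp1 {n : ℕ} (i : Fin n) : Fin (2 * n) := ⟨2 * i.val, by have := i.isLt; omega⟩

/-- The element of `Fin (2n)` at (0-based) position `2i+1`; it corresponds to the paper's
(1-based) position `2i`. -/
def wp2 {n : ℕ} (i : Fin n) : Fin (2 * n) := ⟨2 * i.val + 1, by have := i.isLt; omega⟩

/-- A permutation `π` of `{1,…,2n}` (realized as `Fin (2n)`, 0-based) is a Wick pairing if
`π(2i-1) < π(2i)` for `1 ≤ i ≤ n` and `π(2j-1) < π(2j+1)` for `1 ≤ j ≤ n-1` (1-based). -/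
def IsWickPairing (n : ℕ) (π : Equiv.Perm (Fin (2 * n))) : Prop :=
  (∀ i : Fin n, π (wp1 i) < π (wp2 i)) ∧
  (∀ i : ℕ, ∀ h : i + 1 < n, π (wp1 ⟨i, by omega⟩) < π (wp1 ⟨i + 1, h⟩))

/-- For a Wick pairing `π ∈ 𝒲_{2n}` and `0 ≤ j ≤ 2n`, the set
`M^π_j = {i : π(2i-1) ≤ j < π(2i)}` (1-based values) of pairs whose connecting line
crosses `j`. -/
def wickM (n : ℕ) (π : Equiv.Perm (Fin (2 * n))) (j : ℕ) : Finset (Fin n) :=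
  Finset.univ.filter fun i => (π (wp1 i) : ℕ) < j ∧ j ≤ (π (wp2 i) : ℕ)

/-- The energy `E^{(π,j)}_P(k) = |P - ∑_{ℓ ∈ M^π_j} k_ℓ|² + ∑_{ℓ ∈ M^π_j} ω(k_ℓ)`. -/
noncomputable def wickE (d n : ℕ) (ω : EuclideanSpace ℝ (Fin d) → ℝ)
    (P : EuclideanSpace ℝ (Fin d)) (π : Equiv.Perm (Fin (2 * n))) (j : ℕ)
    (k : Fin n → EuclideanSpace ℝ (Fin d)) : ℝ :=
  ‖P - ∑ ℓ ∈ wickM n π j, k ℓ‖ ^ 2 + ∑ ℓ ∈ wickM n π j, ω (k ℓ)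

section WickAux

lemma core_ineq {d n : ℕ} (ω : EuclideanSpace ℝ (Fin d) → ℝ) (hω : ∀ k, 0 ≤ ω k)
    (P : EuclideanSpace ℝ (Fin d)) (k : Fin n → EuclideanSpace ℝ (Fin d))
    {c : ℝ} (hc : 0 < c) (M : Finset (Fin n)) (i : Fin n) (hi : i ∉ M) :
    c * (c + ω (k i) + ‖k i‖ ^ 2 / 2) ≤
      (c + (‖P - ∑ ℓ ∈ M, k ℓ‖ ^ 2 + ∑ ℓ ∈ M, ω (k ℓ))) *
        (c + (‖P - ∑ ℓ ∈ insert i M, k ℓ‖ ^ 2 + ∑ ℓ ∈ insert i M, ω (k ℓ))) := by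
  rw [Finset.sum_insert hi, Finset.sum_insert hi]
  have hW : 0 ≤ ∑ ℓ ∈ M, ω (k ℓ) := Finset.sum_nonneg fun _ _ => hω _
  have hki : ‖k i‖ ≤ ‖P - ∑ ℓ ∈ M, k ℓ‖ + ‖P - (k i + ∑ ℓ ∈ M, k ℓ)‖ := by
    have h := norm_sub_le (P - ∑ ℓ ∈ M, k ℓ) (P - (k i + ∑ ℓ ∈ M, k ℓ))
    have he : (P - ∑ ℓ ∈ M, k ℓ) - (P - (k i + ∑ ℓ ∈ M, k ℓ)) = k i := by abel
    rwa [he] at h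
  set A := ‖P - ∑ ℓ ∈ M, k ℓ‖ with hA'
  set B := ‖P - (k i + ∑ ℓ ∈ M, k ℓ)‖ with hB'
  have hA : 0 ≤ A := norm_nonneg _
  have hB : 0 ≤ B := norm_nonneg _
  have hk0 : 0 ≤ ‖k i‖ := norm_nonneg _
  nlinarith [sq_nonneg (A - B), sq_nonneg (A + B), hω (k i), mul_nonneg hc.le hW,
    sq_nonneg A, sq_nonneg B, mul_nonneg (mul_nonneg hc.le hA) hB,
    mul_self_le_mul_self hk0 hki, sq_nonneg (‖k i‖)]

lemma contour_ineq (κ γ a E : ℝ) (hE : 0 ≤ E)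
    (z : ℂ) (hz : z.re = -κ + γ * |z.im|) :
    (κ + a + E) ^ 2 ≤ (1 + γ ^ 2) * ‖z - (a : ℂ) - (E : ℂ)‖ ^ 2 := by
  have h2 : ‖z - (a : ℂ) - (E : ℂ)‖ ^ 2 = (z.re - a - E) ^ 2 + z.im ^ 2 := by
    rw [Complex.sq_norm, Complex.normSq_apply]
    simp [Complex.sub_re, Complex.sub_im]
    ring
  rw [h2, hz]
  have h0 := abs_nonneg z.im
  have h3 : |z.im| ^ 2 = z.im ^ 2 := sq_abs z.im
  nlinarith [sq_nonneg ((1 + γ ^ 2) * |z.im| - γ * (κ + a + E))]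

lemma mem_wickM {n : ℕ} (π : Equiv.Perm (Fin (2 * n))) (j : ℕ) (ℓ : Fin n) :
    ℓ ∈ wickM n π j ↔ (π (wp1 ℓ) : ℕ) < j ∧ j ≤ (π (wp2 ℓ) : ℕ) := by
  simp [wickM]

lemma perm_val_ne {m : ℕ} (π : Equiv.Perm (Fin m)) {x y : Fin m} (h : x ≠ y) :
    (π x : ℕ) ≠ (π y : ℕ) := fun hv => h (π.injective (Fin.val_injective hv))

lemma wp1_ne_wp1 {n : ℕ} {ℓ i : Fin n} (h : ℓ ≠ i) : wp1 ℓ ≠ wp1 i := by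
  intro he
  exact h (Fin.val_injective (by have := congrArg Fin.val he; simp [wp1] at this ⊢; omega))

lemma wp2_ne_wp2 {n : ℕ} {ℓ i : Fin n} (h : ℓ ≠ i) : wp2 ℓ ≠ wp2 i := by
  intro he
  exact h (Fin.val_injective (by have := congrArg Fin.val he; simp [wp2] at this ⊢; omega))

lemma wp2_ne_wp1 {n : ℕ} (ℓ i : Fin n) : wp2 ℓ ≠ wp1 i := by
  intro he
  have := congrArg Fin.val he
  simp [wp1, wp2] at this
  omega

lemma wickM_open {n : ℕ} (π : Equiv.Perm (Fin (2 * n)))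
    (hπ : ∀ i : Fin n, π (wp1 i) < π (wp2 i)) (i : Fin n) :
    wickM n π ((π (wp1 i) : ℕ) + 1) = insert i (wickM n π (π (wp1 i) : ℕ)) := by
  ext ℓ
  rw [Finset.mem_insert, mem_wickM, mem_wickM]
  rcases eq_or_ne ℓ i with rfl | hne
  · have h1 : (π (wp1 ℓ) : ℕ) < (π (wp2 ℓ) : ℕ) := hπ ℓ
    simp only [eq_self_iff_true, true_or, iff_true]
    omega
  · have e1 : (π (wp1 ℓ) : ℕ) ≠ (π (wp1 i) : ℕ) := perm_val_ne π (wp1_ne_wp1 hne)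
    have e2 : (π (wp2 ℓ) : ℕ) ≠ (π (wp1 i) : ℕ) := perm_val_ne π (wp2_ne_wp1 ℓ i)
    simp only [hne, false_or]
    omega

lemma not_mem_wickM_open {n : ℕ} (π : Equiv.Perm (Fin (2 * n))) (i : Fin n) :
    i ∉ wickM n π (π (wp1 i) : ℕ) := by
  rw [mem_wickM]; omega

lemma wickM_close {n : ℕ} (π : Equiv.Perm (Fin (2 * n)))
    (hπ : ∀ i : Fin n, π (wp1 i) < π (wp2 i)) (i : Fin n) :
    wickM n π (π (wp2 i) : ℕ) = insert i (wickM n π ((π (wp2 i) : ℕ) + 1)) := by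
  ext ℓ
  rw [Finset.mem_insert, mem_wickM, mem_wickM]
  rcases eq_or_ne ℓ i with rfl | hne
  · have h1 : (π (wp1 ℓ) : ℕ) < (π (wp2 ℓ) : ℕ) := hπ ℓ
    simp only [eq_self_iff_true, true_or, iff_true]
    omega
  · have e1 : (π (wp1 ℓ) : ℕ) ≠ (π (wp2 i) : ℕ) := perm_val_ne π (wp2_ne_wp1 i ℓ).symm
    have e2 : (π (wp2 ℓ) : ℕ) ≠ (π (wp2 i) : ℕ) := perm_val_ne π (wp2_ne_wp2 hne)
    simp only [hne, false_or]
    omega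

lemma not_mem_wickM_close {n : ℕ} (π : Equiv.Perm (Fin (2 * n))) (i : Fin n) :
    i ∉ wickM n π ((π (wp2 i) : ℕ) + 1) := by
  rw [mem_wickM]; omega

lemma wickM_zero {n : ℕ} (π : Equiv.Perm (Fin (2 * n))) : wickM n π 0 = ∅ := by
  ext ℓ; rw [mem_wickM]; simp

lemma wickM_top {n : ℕ} (π : Equiv.Perm (Fin (2 * n))) : wickM n π (2 * n) = ∅ := by
  ext ℓ
  rw [mem_wickM]
  simp only [Finset.notMem_empty, iff_false]
  have := (π (wp2 ℓ)).isLt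
  omega

def wpf {n : ℕ} (p : Fin n × Bool) : Fin (2 * n) := if p.2 then wp2 p.1 else wp1 p.1

lemma wpf_bijective (n : ℕ) : Function.Bijective (wpf (n := n)) := by
  rw [Fintype.bijective_iff_injective_and_card]
  refine ⟨?_, by simp [Fintype.card_prod]; ring⟩
  rintro ⟨i, b⟩ ⟨j, c⟩ h
  have hv : ((wpf (i, b)) : ℕ) = ((wpf (j, c)) : ℕ) := by rw [h]
  cases b <;> cases c <;> simp only [wpf, wp1, wp2, if_true, if_false, Bool.false_eq_true] at hv <;>
    simp only [Prod.mk.injEq] <;>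
    first
      | (exact absurd hv (by omega))
      | (exact ⟨Fin.val_injective (by omega), trivial⟩)

lemma wickE_nonneg {d n : ℕ} (ω : EuclideanSpace ℝ (Fin d) → ℝ) (hω : ∀ k, 0 ≤ ω k)
    (P : EuclideanSpace ℝ (Fin d)) (π : Equiv.Perm (Fin (2 * n))) (j : ℕ)
    (k : Fin n → EuclideanSpace ℝ (Fin d)) : 0 ≤ wickE d n ω P π j k :=
  add_nonneg (by positivity) (Finset.sum_nonneg fun _ _ => hω _)

lemma prod_bound {d n : ℕ} (hn : 1 ≤ n) (ω : EuclideanSpace ℝ (Fin d) → ℝ)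
    (hω : ∀ k, 0 ≤ ω k) (P : EuclideanSpace ℝ (Fin d))
    (k : Fin n → EuclideanSpace ℝ (Fin d)) {c : ℝ} (hc : 0 < c)
    (π : Equiv.Perm (Fin (2 * n))) (hπ : ∀ i : Fin n, π (wp1 i) < π (wp2 i)) :
    c ^ n * ∏ i : Fin n, (c + ω (k i) + ‖k i‖ ^ 2 / 2) ≤
      ∏ j ∈ Finset.Icc 1 (2 * n), (c + wickE d n ω P π j k) := by
  set f : ℕ → ℝ := fun j => c + wickE d n ω P π j k with hf
  have hfpos : ∀ j, 0 < f j := fun j => by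
    have := wickE_nonneg ω hω P π j k
    simp only [hf]; linarith
  have hGpos : ∀ i : Fin n, 0 < c + ω (k i) + ‖k i‖ ^ 2 / 2 := fun i => by
    have := hω (k i); have := sq_nonneg ‖k i‖; positivity
  have hend : f 0 = f (2 * n) := by
    have : wickE d n ω P π 0 k = wickE d n ω P π (2 * n) k := by
      unfold wickE
      rw [wickM_zero, wickM_top]
    show c + wickE d n ω P π 0 k = c + wickE d n ω P π (2 * n) k
    rw [this]
  have hsq : (∏ j ∈ Finset.Icc 1 (2 * n), f j) ^ 2
      = ∏ v ∈ Finset.range (2 * n), (f v * f (v + 1)) := by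
    rw [Finset.prod_mul_distrib]
    have h1 : ∏ v ∈ Finset.range (2 * n), f (v + 1) = ∏ j ∈ Finset.Icc 1 (2 * n), f j := by
      rw [← Finset.Ico_add_one_right_eq_Icc, Finset.prod_Ico_eq_prod_range]
      refine Finset.prod_congr (by congr 1) fun i _ => by rw [Nat.add_comm]
    have h2 : ∏ v ∈ Finset.range (2 * n), f v = ∏ j ∈ Finset.Icc 1 (2 * n), f j := by
      rw [← Finset.Ico_add_one_right_eq_Icc, Finset.prod_Ico_succ_top (by omega : 1 ≤ 2 * n),
        Finset.range_eq_Ico, Finset.prod_eq_prod_Ico_succ_bot (by omega : 0 < 2 * n), hend]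
      ring
    rw [h1, h2]; ring
  have hre : ∏ v ∈ Finset.range (2 * n), (f v * f (v + 1))
      = ∏ m : Fin (2 * n), (f ((π m : ℕ)) * f ((π m : ℕ) + 1)) := by
    rw [← Fin.prod_univ_eq_prod_range (fun v => f v * f (v + 1)) (2 * n)]
    exact (Equiv.prod_comp π (fun v : Fin (2 * n) => f (v : ℕ) * f ((v : ℕ) + 1))).symm
  have hsplit : ∏ m : Fin (2 * n), (f ((π m : ℕ)) * f ((π m : ℕ) + 1))
      = ∏ i : Fin n, ((f ((π (wp1 i) : ℕ)) * f ((π (wp1 i) : ℕ) + 1)) *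
          (f ((π (wp2 i) : ℕ)) * f ((π (wp2 i) : ℕ) + 1))) := by
    rw [← Fintype.prod_bijective wpf (wpf_bijective n)
      (fun p => f ((π (wpf p) : ℕ)) * f ((π (wpf p) : ℕ) + 1))
      (fun m => f ((π m : ℕ)) * f ((π m : ℕ) + 1)) (fun p => rfl)]
    rw [Fintype.prod_prod_type]
    refine Finset.prod_congr rfl fun i _ => ?_
    rw [Fintype.prod_bool]
    simp only [wpf, if_true, if_false, Bool.false_eq_true]
    ring
  have hpair : ∀ i : Fin n, (c * (c + ω (k i) + ‖k i‖ ^ 2 / 2)) ^ 2 ≤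
      (f ((π (wp1 i) : ℕ)) * f ((π (wp1 i) : ℕ) + 1)) *
        (f ((π (wp2 i) : ℕ)) * f ((π (wp2 i) : ℕ) + 1)) := by
    intro i
    have hopen : c * (c + ω (k i) + ‖k i‖ ^ 2 / 2) ≤
        f ((π (wp1 i) : ℕ)) * f ((π (wp1 i) : ℕ) + 1) := by
      calc c * (c + ω (k i) + ‖k i‖ ^ 2 / 2) ≤ _ :=
            core_ineq ω hω P k hc (wickM n π (π (wp1 i) : ℕ)) i (not_mem_wickM_open π i)
        _ = f ((π (wp1 i) : ℕ)) * f ((π (wp1 i) : ℕ) + 1) := by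
            simp only [hf, wickE, wickM_open π hπ i]
    have hclose : c * (c + ω (k i) + ‖k i‖ ^ 2 / 2) ≤
        f ((π (wp2 i) : ℕ)) * f ((π (wp2 i) : ℕ) + 1) := by
      calc c * (c + ω (k i) + ‖k i‖ ^ 2 / 2) ≤ _ :=
            core_ineq ω hω P k hc (wickM n π ((π (wp2 i) : ℕ) + 1)) i (not_mem_wickM_close π i)
        _ = f ((π (wp2 i) : ℕ)) * f ((π (wp2 i) : ℕ) + 1) := by
            simp only [hf, wickE, wickM_close π hπ i]
            ring
    have h0 : 0 ≤ c * (c + ω (k i) + ‖k i‖ ^ 2 / 2) := le_of_lt (mul_pos hc (hGpos i))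
    have := mul_le_mul hopen hclose h0 (le_of_lt (mul_pos (hfpos _) (hfpos _)))
    calc (c * (c + ω (k i) + ‖k i‖ ^ 2 / 2)) ^ 2
        = (c * (c + ω (k i) + ‖k i‖ ^ 2 / 2)) * (c * (c + ω (k i) + ‖k i‖ ^ 2 / 2)) := sq _
      _ ≤ _ := this
  have hmain : (c ^ n * ∏ i : Fin n, (c + ω (k i) + ‖k i‖ ^ 2 / 2)) ^ 2
      ≤ (∏ j ∈ Finset.Icc 1 (2 * n), f j) ^ 2 := by
    rw [hsq, hre, hsplit]
    calc (c ^ n * ∏ i : Fin n, (c + ω (k i) + ‖k i‖ ^ 2 / 2)) ^ 2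
        = ∏ i : Fin n, (c * (c + ω (k i) + ‖k i‖ ^ 2 / 2)) ^ 2 := by
          rw [Finset.prod_pow, Finset.prod_mul_distrib, Finset.prod_const,
            Finset.card_univ, Fintype.card_fin]
      _ ≤ _ := Finset.prod_le_prod
          (fun i _ => sq_nonneg _) (fun i _ => hpair i)
  have h1 : 0 ≤ c ^ n * ∏ i : Fin n, (c + ω (k i) + ‖k i‖ ^ 2 / 2) := by
    have : 0 < ∏ i : Fin n, (c + ω (k i) + ‖k i‖ ^ 2 / 2) :=
      Finset.prod_pos fun i _ => hGpos i
    positivity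
  have h2 : 0 ≤ ∏ j ∈ Finset.Icc 1 (2 * n), f j :=
    le_of_lt (Finset.prod_pos fun j _ => hfpos j)
  exact (pow_le_pow_iff_left₀ h1 h2 two_ne_zero).mp hmain

end WickAux

/-- For `z` on the contour `Re z = -κ + γ|Im z|`, each factor `z - a - E^{(π,j)}_P(k)` is
nonzero and `∏_{j=1}^{2n} |z - a - E^{(π,j)}_P(k)|⁻¹
  ≤ ((1+γ²)/(κ+a))ⁿ ∏_{i=1}^n (κ + a + ω(k_i) + |k_i|²/2)⁻¹`. -/


theorem wick_resolvent_product_bound (d n : ℕ) (hd : 1 ≤ d) (hn : 1 ≤ n)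
    (ω : EuclideanSpace ℝ (Fin d) → ℝ) (hω : ∀ k, 0 ≤ ω k)
    (P : EuclideanSpace ℝ (Fin d)) (a : ℝ) (ha : 0 ≤ a)
    (κ γ : ℝ) (hκ : 0 < κ) (hγ : 0 < γ)
    (π : Equiv.Perm (Fin (2 * n))) (hπ : IsWickPairing n π)
    (z : ℂ) (hz : z.re = -κ + γ * |z.im|)
    (k : Fin n → EuclideanSpace ℝ (Fin d)) :
    (∀ j ∈ Finset.Icc 1 (2 * n), z - (a : ℂ) - (wickE d n ω P π j k : ℂ) ≠ 0) ∧
    ∏ j ∈ Finset.Icc 1 (2 * n), ‖z - (a : ℂ) - (wickE d n ω P π j k : ℂ)‖⁻¹ ≤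
      ((1 + γ ^ 2) / (κ + a)) ^ n * ∏ i : Fin n, (κ + a + ω (k i) + ‖k i‖ ^ 2 / 2)⁻¹ := by
  obtain ⟨hπ1, -⟩ := hπ
  have hc : 0 < κ + a := by linarith
  have hEnn : ∀ j, 0 ≤ wickE d n ω P π j k := fun j => wickE_nonneg ω hω P π j k
  have hcE : ∀ j, 0 < κ + a + wickE d n ω P π j k := fun j => by have := hEnn j; linarith
  have hγ2 : (0:ℝ) < 1 + γ ^ 2 := by positivity
  set s := Real.sqrt (1 + γ ^ 2) with hs_def
  have hs2 : s ^ 2 = 1 + γ ^ 2 := Real.sq_sqrt hγ2.le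
  have hs0 : 0 < s := Real.sqrt_pos.mpr hγ2
  have habs : ∀ j, κ + a + wickE d n ω P π j k ≤
      s * ‖z - (a : ℂ) - (wickE d n ω P π j k : ℂ)‖ := by
    intro j
    have h := contour_ineq κ γ a _ (hEnn j) z hz
    have h2 : (κ + a + wickE d n ω P π j k) ^ 2 ≤
        (s * ‖z - (a : ℂ) - (wickE d n ω P π j k : ℂ)‖) ^ 2 := by
      rw [mul_pow, hs2]; exact h
    exact (pow_le_pow_iff_left₀ (hcE j).le
      (mul_nonneg hs0.le (norm_nonneg _)) two_ne_zero).mp h2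
  have habs_pos : ∀ j, 0 < ‖z - (a : ℂ) - (wickE d n ω P π j k : ℂ)‖ := by
    intro j
    have h := habs j
    nlinarith [hcE j, hs0]
  constructor
  · intro j _ h0
    have := habs_pos j
    rw [h0] at this
    simp at this
  · have hfac : ∀ j, (‖z - (a : ℂ) - (wickE d n ω P π j k : ℂ)‖)⁻¹ ≤
        s * (κ + a + wickE d n ω P π j k)⁻¹ := by
      intro j
      have h1 : (κ + a + wickE d n ω P π j k) / s ≤
          ‖z - (a : ℂ) - (wickE d n ω P π j k : ℂ)‖ :=
        (div_le_iff₀ hs0).mpr (by rw [mul_comm]; exact habs j)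
      have h2 := inv_anti₀ (div_pos (hcE j) hs0) h1
      rwa [inv_div, div_eq_mul_inv] at h2
    have hprod1 : ∏ j ∈ Finset.Icc 1 (2 * n),
          (‖z - (a : ℂ) - (wickE d n ω P π j k : ℂ)‖)⁻¹ ≤
        ∏ j ∈ Finset.Icc 1 (2 * n), (s * (κ + a + wickE d n ω P π j k)⁻¹) :=
      Finset.prod_le_prod (fun j _ => inv_nonneg.mpr (norm_nonneg _))
        (fun j _ => hfac j)
    have hcard : (Finset.Icc 1 (2 * n)).card = 2 * n := by
      rw [Nat.card_Icc]; omega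
    have hprod2 : ∏ j ∈ Finset.Icc 1 (2 * n), (s * (κ + a + wickE d n ω P π j k)⁻¹)
        = (1 + γ ^ 2) ^ n * (∏ j ∈ Finset.Icc 1 (2 * n), (κ + a + wickE d n ω P π j k))⁻¹ := by
      rw [Finset.prod_mul_distrib, Finset.prod_const, hcard, ← Finset.prod_inv_distrib,
        show s ^ (2 * n) = (s ^ 2) ^ n from by rw [← pow_mul], hs2]
    have hG : 0 < ∏ i : Fin n, (κ + a + ω (k i) + ‖k i‖ ^ 2 / 2) :=
      Finset.prod_pos fun i _ => by have := hω (k i); have := sq_nonneg ‖k i‖; positivity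
    have hmain := prod_bound hn ω hω P k hc π hπ1
    have hinv : (∏ j ∈ Finset.Icc 1 (2 * n), (κ + a + wickE d n ω P π j k))⁻¹ ≤
        ((κ + a) ^ n * ∏ i : Fin n, (κ + a + ω (k i) + ‖k i‖ ^ 2 / 2))⁻¹ :=
      inv_anti₀ (by positivity) hmain
    have hR : ((1 + γ ^ 2) / (κ + a)) ^ n * ∏ i : Fin n, (κ + a + ω (k i) + ‖k i‖ ^ 2 / 2)⁻¹
        = (1 + γ ^ 2) ^ n * ((κ + a) ^ n * ∏ i : Fin n, (κ + a + ω (k i) + ‖k i‖ ^ 2 / 2))⁻¹ := by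
      rw [Finset.prod_inv_distrib, div_pow, mul_inv]
      ring
    calc ∏ j ∈ Finset.Icc 1 (2 * n),
          (‖z - (a : ℂ) - (wickE d n ω P π j k : ℂ)‖)⁻¹
        ≤ ∏ j ∈ Finset.Icc 1 (2 * n), (s * (κ + a + wickE d n ω P π j k)⁻¹) := hprod1
      _ = (1 + γ ^ 2) ^ n *
            (∏ j ∈ Finset.Icc 1 (2 * n), (κ + a + wickE d n ω P π j k))⁻¹ := hprod2
      _ ≤ (1 + γ ^ 2) ^ n *
            ((κ + a) ^ n * ∏ i : Fin n, (κ + a + ω (k i) + ‖k i‖ ^ 2 / 2))⁻¹ := by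
          exact mul_le_mul_of_nonneg_left hinv (by positivity)
      _ = _ := hR.symm
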